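/- Suppose in addition that S is finitely generated as a monoid, generates M as a group, and satisfies S ∩ (−S) = {0}. Let μ ∈ M and let ∂ be a nonzero locally nilpotent K-linear derivation of K[S] that is homogeneous of degree μ, i.e. for every λ ∈ S: if λ + μ ∈ S then ∂(f_λ) ∈ K·f_{λ+μ}, and if λ + μ ∉ S then ∂(f_λ) = 0. Then there exist c ∈ K, c ≠ 0, and an additive group homomorphism ρ : M → ℤ with ρ(μ) = −1 and ρ(λ) ≥ 0 for all λ ∈ S, such that ∂(f_λ) = c·ρ(λ)·f_{λ+μ} for every λ ∈ S with ρ(λ) > 0 (in which case λ + μ ∈ S) and ∂(f_λ) = 0 for every λ ∈ S with ρ(λ) = 0. (This is the classification of homogeneous locally nilpotent derivations on affine toric varieties: every nonzero T-normalized LND on A_C has the form c·∂_μ for a Demazure root μ of the cone C.) -/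

import Mathlib

open AddMonoidAlgebra

/-- Classification of homogeneous locally nilpotent derivations on affine toric varieties:
every nonzero locally nilpotent `K`-derivation of `K[S]` homogeneous of degree `μ` has the form
`c·∂_μ` for a Demazure root `μ` of the weight cone, i.e. there exist `c ≠ 0` and `ρ : M →+ ℤ`
with `ρ(μ) = -1`, `ρ ≥ 0` on `S`, such that `∂ f_λ = c ρ(λ) f_{λ+μ}` when `ρ(λ) > 0` and
`∂ f_λ = 0` when `ρ(λ) = 0`. -/
theorem stmt10 {K M : Type*} [Field K] [CharZero K] [AddCommGroup M]
    [Module.Free ℤ M] [Module.Finite ℤ M]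
    (S : AddSubmonoid M) (hFG : S.FG)
    (hgen : AddSubgroup.closure (S : Set M) = ⊤)
    (hsharp : ∀ x ∈ S, -x ∈ S → x = 0)
    (μ : M)
    (D : Derivation K (AddMonoidAlgebra K S) (AddMonoidAlgebra K S))
    (hD0 : D ≠ 0)
    (hLN : ∀ a : AddMonoidAlgebra K S, ∃ n : ℕ, (D.toLinearMap ^ n) a = 0)
    (hhom : ∀ l : S,
      (∀ h : (l : M) + μ ∈ S, ∃ c : K, D (of' K S l) = c • of' K S (⟨(l : M) + μ, h⟩ : S))
      ∧ ((l : M) + μ ∉ S → D (of' K S l) = 0)) :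
    ∃ (c : K) (ρ : M →+ ℤ), c ≠ 0 ∧ ρ μ = -1 ∧ (∀ l ∈ S, 0 ≤ ρ l)
      ∧ ∀ l : S,
        (∀ _h : 0 < ρ (l : M), ∃ hmem : (l : M) + μ ∈ S,
          D (of' K S l) = (c * (ρ (l : M) : K)) • of' K S (⟨(l : M) + μ, hmem⟩ : S))
        ∧ (ρ (l : M) = 0 → D (of' K S l) = 0) := by
  classical
  have hof_ne : ∀ a : S, of' K S a ≠ 0 := fun a => by
    rw [of'_apply]
    exact fun h => one_ne_zero (AddMonoidAlgebra.single_eq_zero.mp h)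
  have hmul : ∀ a b : S, of' K S a * of' K S b = of' K S (a + b) := fun a b => by
    rw [of'_apply, of'_apply, of'_apply, AddMonoidAlgebra.single_mul_single, one_mul]
  have hinj : ∀ (a : S) (x y : K), x • of' K S a = y • of' K S a → x = y :=
    fun a x y h => smul_left_injective K (hof_ne a) h
  -- the coefficient function
  set cf : S → K := fun l => if h : (l : M) + μ ∈ S then ((hhom l).1 h).choose else 0 with hcfdef
  have hcf_spec : ∀ (l : S) (h : (l : M) + μ ∈ S),
      D (of' K S l) = cf l • of' K S ⟨(l : M) + μ, h⟩ := by
    intro l h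
    simp only [hcfdef, dif_pos h]
    exact ((hhom l).1 h).choose_spec
  have hcf_nm : ∀ l : S, (l : M) + μ ∉ S → cf l = 0 := by
    intro l h; simp only [hcfdef, dif_neg h]
  have hDf : ∀ l : S, cf l ≠ 0 → (l : M) + μ ∈ S := by
    intro l h; by_contra hm; exact h (hcf_nm l hm)
  have hD_zero : ∀ l : S, cf l = 0 → D (of' K S l) = 0 := by
    intro l h
    by_cases hm : (l : M) + μ ∈ S
    · rw [hcf_spec l hm, h, zero_smul]
    · exact (hhom l).2 hm
  -- leibniz
  have hleib : ∀ a b : S, D (of' K S (a + b)) =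
      of' K S a * D (of' K S b) + of' K S b * D (of' K S a) := by
    intro a b
    rw [← hmul, D.leibniz, smul_eq_mul, smul_eq_mul]
  -- additivity of cf
  have hadd : ∀ a b : S, cf (a + b) = cf a + cf b := by
    intro a b
    by_cases ha : (a : M) + μ ∈ S
    · have hab : ((a + b : S) : M) + μ ∈ S := by
        have h1 : ((a + b : S) : M) + μ = ((a : M) + μ) + (b : M) := by push_cast; abel
        rw [h1]; exact S.add_mem ha b.2
      have e2 : b + (⟨(a : M) + μ, ha⟩ : S) = ⟨((a + b : S) : M) + μ, hab⟩ :=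
        Subtype.ext (by push_cast; abel)
      by_cases hb : (b : M) + μ ∈ S
      · have e1 : a + (⟨(b : M) + μ, hb⟩ : S) = ⟨((a + b : S) : M) + μ, hab⟩ :=
          Subtype.ext (by push_cast; abel)
        have key : D (of' K S (a + b)) = (cf a + cf b) • of' K S ⟨((a + b : S) : M) + μ, hab⟩ := by
          rw [hleib a b, hcf_spec a ha, hcf_spec b hb, mul_smul_comm, mul_smul_comm,
            hmul, hmul, e1, e2, ← add_smul, add_comm (cf b) (cf a)]
        rw [hcf_spec (a + b) hab] at key
        exact hinj _ _ _ key
      · have key : D (of' K S (a + b)) = (cf a + cf b) • of' K S ⟨((a + b : S) : M) + μ, hab⟩ := by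
          rw [hleib a b, hD_zero b (hcf_nm b hb), mul_zero, zero_add, hcf_spec a ha,
            mul_smul_comm, hmul, e2, hcf_nm b hb, add_zero]
        rw [hcf_spec (a + b) hab] at key
        exact hinj _ _ _ key
    · by_cases hb : (b : M) + μ ∈ S
      · have hab : ((a + b : S) : M) + μ ∈ S := by
          have h1 : ((a + b : S) : M) + μ = ((b : M) + μ) + (a : M) := by push_cast; abel
          rw [h1]; exact S.add_mem hb a.2
        have e1 : a + (⟨(b : M) + μ, hb⟩ : S) = ⟨((a + b : S) : M) + μ, hab⟩ :=
          Subtype.ext (by push_cast; abel)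
        have key : D (of' K S (a + b)) = (cf a + cf b) • of' K S ⟨((a + b : S) : M) + μ, hab⟩ := by
          rw [hleib a b, hD_zero a (hcf_nm a ha), mul_zero, add_zero, hcf_spec b hb,
            mul_smul_comm, hmul, e1, hcf_nm a ha, zero_add]
        rw [hcf_spec (a + b) hab] at key
        exact hinj _ _ _ key
      · have key : D (of' K S (a + b)) = 0 := by
          rw [hleib a b, hD_zero a (hcf_nm a ha), hD_zero b (hcf_nm b hb), mul_zero, mul_zero,
            add_zero]
        rw [hcf_nm a ha, hcf_nm b hb, add_zero]
        by_cases hab : ((a + b : S) : M) + μ ∈ S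
        · rw [hcf_spec (a + b) hab] at key
          have : cf (a + b) • of' K S ⟨((a + b : S) : M) + μ, hab⟩
              = (0 : K) • of' K S ⟨((a + b : S) : M) + μ, hab⟩ := by rw [zero_smul, ← key]
          exact hinj _ _ _ this
        · exact hcf_nm _ hab
  -- there is σ₀ with cf σ₀ ≠ 0, since D ≠ 0
  obtain ⟨σ₀, hσ₀⟩ : ∃ l : S, cf l ≠ 0 := by
    by_contra hall
    push_neg at hall
    apply hD0
    apply Derivation.ext
    intro x
    rw [Derivation.zero_apply]
    induction x using AddMonoidAlgebra.induction_linear with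
    | zero => simp
    | add f g hf hg => rw [map_add, hf, hg, add_zero]
    | single l x =>
      have : (AddMonoidAlgebra.single l x : AddMonoidAlgebra K S) = x • of' K S l := by
        rw [of'_apply, AddMonoidAlgebra.smul_single, smul_eq_mul, mul_one]
      rw [this, D.map_smul, hD_zero l (hall l), smul_zero]
  have hσμ : (σ₀ : M) + μ ∈ S := hDf σ₀ hσ₀
  set d : K := cf ⟨(σ₀ : M) + μ, hσμ⟩ - cf σ₀ with hddef
  -- step lemma: cf (l + μ) = cf l + d
  have hstep : ∀ (l : S) (h : (l : M) + μ ∈ S), cf ⟨(l : M) + μ, h⟩ = cf l + d := by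
    intro l h
    have e : (⟨(l : M) + μ, h⟩ : S) + σ₀ = l + ⟨(σ₀ : M) + μ, hσμ⟩ :=
      Subtype.ext (by push_cast; abel)
    have h5 := hadd ⟨(l : M) + μ, h⟩ σ₀
    rw [e, hadd l ⟨(σ₀ : M) + μ, hσμ⟩] at h5
    rw [hddef]
    linear_combination -h5
  -- the chain lemma
  have hchain : ∀ (j : ℕ) (l : S), (∀ k < j, cf l + (k : K) * d ≠ 0) →
      ∃ h : (l : M) + (j : ℤ) • μ ∈ S,
        cf ⟨(l : M) + (j : ℤ) • μ, h⟩ = cf l + (j : K) * d ∧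
        (D.toLinearMap ^ j) (of' K S l)
          = (∏ k ∈ Finset.range j, (cf l + (k : K) * d)) • of' K S ⟨(l : M) + (j : ℤ) • μ, h⟩ := by
    intro j
    induction j with
    | zero =>
      intro l _
      have h : (l : M) + ((0 : ℕ) : ℤ) • μ ∈ S := by simpa using l.2
      have e : (⟨(l : M) + ((0 : ℕ) : ℤ) • μ, h⟩ : S) = l := Subtype.ext (by push_cast; simp)
      exact ⟨h, by rw [e]; simp, by rw [e]; simp⟩
    | succ j ih =>
      intro l hne
      obtain ⟨h, hc, heq⟩ := ih l (fun k hk => hne k (Nat.lt_succ_of_lt hk))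
      set L : S := ⟨(l : M) + ((j : ℕ) : ℤ) • μ, h⟩ with hLdef
      have hcL : cf L ≠ 0 := by rw [hc]; exact hne j (Nat.lt_succ_self j)
      have hLm : (L : M) + μ ∈ S := hDf L hcL
      have h' : (l : M) + ((j + 1 : ℕ) : ℤ) • μ ∈ S := by
        have e : (l : M) + ((j + 1 : ℕ) : ℤ) • μ = (L : M) + μ := by
          rw [hLdef]
          push_cast
          rw [add_smul, one_smul]
          abel
        rw [e]; exact hLm
      have e2 : (⟨(L : M) + μ, hLm⟩ : S) = ⟨(l : M) + ((j + 1 : ℕ) : ℤ) • μ, h'⟩ :=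
        Subtype.ext (by push_cast; rw [add_smul, one_smul]; simp only [hLdef]; abel)
      refine ⟨h', ?_, ?_⟩
      · rw [← e2, hstep L hLm, hc]
        push_cast; ring
      · rw [pow_succ', Module.End.mul_apply, heq, map_smul]
        have hDL : D.toLinearMap (of' K S L) = cf L • of' K S ⟨(L : M) + μ, hLm⟩ := hcf_spec L hLm
        rw [hDL, e2, smul_smul, Finset.prod_range_succ, hc]
  -- local nilpotency gives: for each l, the progression hits zero
  have hdag : ∀ l : S, ∃ k : ℕ, cf l + (k : K) * d = 0 := by
    intro l
    by_contra hall
    push_neg at hall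
    obtain ⟨n, hn⟩ := hLN (of' K S l)
    obtain ⟨h, _, heq⟩ := hchain n l (fun k _ => hall k)
    rw [hn] at heq
    have hprod : (∏ k ∈ Finset.range n, (cf l + (k : K) * d)) ≠ 0 :=
      Finset.prod_ne_zero_iff.2 fun k _ => hall k
    exact hprod ((smul_eq_zero.mp heq.symm).resolve_right (hof_ne _))
  have hd : d ≠ 0 := by
    intro h0
    obtain ⟨k, hk⟩ := hdag σ₀
    rw [h0, mul_zero, add_zero] at hk
    exact hσ₀ hk
  set c : K := -d with hcdef
  have hc0 : c ≠ 0 := neg_ne_zero.2 hd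
  -- the natural number valued function
  have hkf : ∀ l : S, ∃ k : ℕ, cf l = (k : K) * c := by
    intro l
    obtain ⟨k, hk⟩ := hdag l
    refine ⟨k, ?_⟩
    rw [hcdef]
    linear_combination hk
  set kf : S → ℕ := fun l => (hkf l).choose with hkfdef
  have hkf_spec : ∀ l : S, cf l = (kf l : K) * c := fun l => (hkf l).choose_spec
  have hkuniq : ∀ (l : S) (k : ℕ), cf l = (k : K) * c → kf l = k := by
    intro l k hk
    have h1 := hkf_spec l
    rw [hk] at h1
    exact_mod_cast Nat.cast_injective (mul_right_cancel₀ hc0 h1.symm)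
  have hkadd : ∀ a b : S, kf (a + b) = kf a + kf b := by
    intro a b
    apply hkuniq
    rw [hadd a b, hkf_spec a, hkf_spec b]
    push_cast; ring
  have hcf0 : cf 0 = 0 := by
    have h00 := hadd 0 0
    rw [add_zero] at h00
    exact (left_eq_add.mp h00)
  have hk0 : kf 0 = 0 := by
    apply hkuniq
    rw [hcf0]; simp
  -- every element of M is a difference of elements of S
  have hdiff : ∀ m : M, ∃ s t : S, m = (s : M) - t := by
    intro m
    have hm : m ∈ AddSubgroup.closure (S : Set M) := hgen ▸ AddSubgroup.mem_top m
    induction hm using AddSubgroup.closure_induction with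
    | mem x hx => exact ⟨⟨x, hx⟩, 0, by simp⟩
    | zero => exact ⟨0, 0, by simp⟩
    | add x y _ _ hx hy =>
      obtain ⟨s, t, rfl⟩ := hx
      obtain ⟨s', t', rfl⟩ := hy
      exact ⟨s + s', t + t', by push_cast; abel⟩
    | neg x _ hx =>
      obtain ⟨s, t, rfl⟩ := hx
      exact ⟨t, s, by push_cast; abel⟩
  set sf : M → S := fun m => (hdiff m).choose with hsfdef
  set tf : M → S := fun m => (hdiff m).choose_spec.choose with htfdef
  have hst : ∀ m : M, m = (sf m : M) - tf m := fun m => (hdiff m).choose_spec.choose_spec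
  set ρ0 : M → ℤ := fun m => (kf (sf m) : ℤ) - kf (tf m) with hρ0def
  have hρ0wd : ∀ (m : M) (s t : S), m = (s : M) - t → ρ0 m = (kf s : ℤ) - kf t := by
    intro m s t hmst
    have h0 : (sf m : M) - tf m = (s : M) - t := by rw [← hst m, hmst]
    have h1 : (sf m : M) + t = (s : M) + tf m := sub_eq_sub_iff_add_eq_add.mp h0
    have h2 : sf m + t = s + tf m := Subtype.ext (by push_cast; exact h1)
    have h3 : kf (sf m) + kf t = kf s + kf (tf m) := by rw [← hkadd, ← hkadd, h2]
    simp only [hρ0def]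
    omega
  have hρ0add : ∀ m m' : M, ρ0 (m + m') = ρ0 m + ρ0 m' := by
    intro m m'
    obtain ⟨s₁, t₁, h1⟩ := hdiff m
    obtain ⟨s₂, t₂, h2⟩ := hdiff m'
    have h3 : m + m' = ((s₁ + s₂ : S) : M) - ((t₁ + t₂ : S) : M) := by
      rw [h1, h2]; push_cast; abel
    rw [hρ0wd m s₁ t₁ h1, hρ0wd m' s₂ t₂ h2, hρ0wd (m + m') _ _ h3, hkadd, hkadd]
    push_cast; ring
  set ρ : M →+ ℤ := AddMonoidHom.mk' ρ0 hρ0add with hρdef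
  have hρl : ∀ l : S, ρ (l : M) = kf l := by
    intro l
    have h : (l : M) = ((l : S) : M) - ((0 : S) : M) := by simp
    show ρ0 (l : M) = kf l
    rw [hρ0wd _ l 0 h, hk0]; simp
  -- ρ μ = -1
  have hρμ : ρ μ = -1 := by
    have hμd : μ = ((⟨(σ₀ : M) + μ, hσμ⟩ : S) : M) - (σ₀ : M) := by
      rw [show ((⟨(σ₀ : M) + μ, hσμ⟩ : S) : M) = (σ₀ : M) + μ from rfl, add_sub_cancel_left]
    have hkσ : kf ⟨(σ₀ : M) + μ, hσμ⟩ + 1 = kf σ₀ := by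
      have hcast : ((kf ⟨(σ₀ : M) + μ, hσμ⟩ + 1 : ℕ) : K) = ((kf σ₀ : ℕ) : K) := by
        apply mul_right_cancel₀ hc0
        have h1 := hkf_spec σ₀
        have h2 := hkf_spec ⟨(σ₀ : M) + μ, hσμ⟩
        have h3 := hstep σ₀ hσμ
        push_cast
        linear_combination -h2 + h3 + h1 + hcdef
      exact_mod_cast hcast
    show ρ0 μ = -1
    rw [hρ0wd μ _ σ₀ hμd]
    omega
  refine ⟨c, ρ, hc0, hρμ, ?_, ?_⟩
  · intro l hl
    rw [show l = ((⟨l, hl⟩ : S) : M) from rfl, hρl ⟨l, hl⟩]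
    exact Int.ofNat_nonneg _
  · intro l
    constructor
    · intro hpos
      have hρ := hρl l
      rw [hρ] at hpos
      have hkl : 0 < kf l := by exact_mod_cast hpos
      have hcl : cf l ≠ 0 := by
        rw [hkf_spec l]
        exact mul_ne_zero (Nat.cast_ne_zero.2 hkl.ne') hc0
      refine ⟨hDf l hcl, ?_⟩
      rw [hcf_spec l (hDf l hcl)]
      congr 1
      rw [hkf_spec l, hρ]
      push_cast; ring
    · intro hz
      rw [hρl l] at hz
      have hkl : kf l = 0 := by exact_mod_cast hz
      apply hD_zero
      rw [hkf_spec l, hkl]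
      simp
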